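/- On ℝ², the vector fields X₁ = (y,−x), X₂ = (1+x²−y², 2xy), X₃ = (2xy, 1+y²−x²) (the class P₃ ≅ so(3)) are Hamiltonian with respect to the symplectic form ω = (1+x²+y²)^{−2} dx∧dy with Hamiltonian functions h₁ = −1/(2(1+x²+y²)), h₂ = y/(1+x²+y²), h₃ = −x/(1+x²+y²), respectively (i.e. ∂h_i/∂x = −(1+x²+y²)^{−2}·X_i² and ∂h_i/∂y = (1+x²+y²)^{−2}·X_i¹). Moreover, under the Poisson bracket {g,h}_ω = (1+x²+y²)²(∂g/∂x·∂h/∂y − ∂g/∂y·∂h/∂x) these satisfy {h₁,h₂}_ω = −h₃, {h₁,h₃}_ω = h₂, and {h₂,h₃}_ω = −4h₁ − 1; hence ⟨h₁,h₂,h₃,1⟩ is closed under the Poisson bracket (a central extension of so(3)). -/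

import Mathlib

namespace Stmt8

/-- Partial derivative in the x-direction. -/
noncomputable def pdx (f : ℝ × ℝ → ℝ) (p : ℝ × ℝ) : ℝ := fderiv ℝ f p (1, 0)

/-- Partial derivative in the y-direction. -/
noncomputable def pdy (f : ℝ × ℝ → ℝ) (p : ℝ × ℝ) : ℝ := fderiv ℝ f p (0, 1)

/-- Poisson bracket induced by ω = (1+x²+y²)⁻² dx∧dy. -/
noncomputable def pbw (g h : ℝ × ℝ → ℝ) (p : ℝ × ℝ) : ℝ :=
  (1 + p.1 ^ 2 + p.2 ^ 2) ^ 2 * (pdx g p * pdy h p - pdy g p * pdx h p)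

/-- Basis of the class P₃ ≅ so(3). -/
def X1 : ℝ × ℝ → ℝ × ℝ := fun p => (p.2, -p.1)
def X2 : ℝ × ℝ → ℝ × ℝ := fun p => (1 + p.1 ^ 2 - p.2 ^ 2, 2 * p.1 * p.2)
def X3 : ℝ × ℝ → ℝ × ℝ := fun p => (2 * p.1 * p.2, 1 + p.2 ^ 2 - p.1 ^ 2)

noncomputable def h1 : ℝ × ℝ → ℝ := fun p => -(1 / (2 * (1 + p.1 ^ 2 + p.2 ^ 2)))
noncomputable def h2 : ℝ × ℝ → ℝ := fun p => p.2 / (1 + p.1 ^ 2 + p.2 ^ 2)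
noncomputable def h3 : ℝ × ℝ → ℝ := fun p => -(p.1 / (1 + p.1 ^ 2 + p.2 ^ 2))

lemma qne (p : ℝ × ℝ) : 1 + p.1 ^ 2 + p.2 ^ 2 ≠ 0 := by positivity

lemma hasQ (p : ℝ × ℝ) :
    HasFDerivAt (fun p : ℝ × ℝ => 1 + p.1 ^ 2 + p.2 ^ 2)
      ((2 * p.1) • ContinuousLinearMap.fst ℝ ℝ ℝ + (2 * p.2) • ContinuousLinearMap.snd ℝ ℝ ℝ) p := by
  have h := ((((hasFDerivAt_fst (𝕜 := ℝ) (p := p)).mul (hasFDerivAt_fst (𝕜 := ℝ) (p := p))).const_add 1).add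
    ((hasFDerivAt_snd (𝕜 := ℝ) (p := p)).mul (hasFDerivAt_snd (𝕜 := ℝ) (p := p))))
  have he : (fun p : ℝ × ℝ => 1 + p.1 * p.1 + p.2 * p.2) = fun p : ℝ × ℝ => 1 + p.1 ^ 2 + p.2 ^ 2 := by
    funext q; ring
  change HasFDerivAt (fun p : ℝ × ℝ => 1 + p.1 * p.1 + p.2 * p.2) _ p at h
  rw [he] at h
  refine h.congr_fderiv ?_
  ext v <;> simp <;> ring

lemma pd1 {f : ℝ × ℝ → ℝ} {L : ℝ × ℝ →L[ℝ] ℝ} {p : ℝ × ℝ} (h : HasFDerivAt f L p) :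
    pdx f p = L (1, 0) := by rw [pdx, h.fderiv]

lemma pd2 {f : ℝ × ℝ → ℝ} {L : ℝ × ℝ →L[ℝ] ℝ} {p : ℝ × ℝ} (h : HasFDerivAt f L p) :
    pdy f p = L (0, 1) := by rw [pdy, h.fderiv]

lemma hasQinv (p : ℝ × ℝ) :
    HasFDerivAt (fun p : ℝ × ℝ => (1 + p.1 ^ 2 + p.2 ^ 2)⁻¹)
      ((ContinuousLinearMap.smulRight (1 : ℝ →L[ℝ] ℝ) (-((1 + p.1 ^ 2 + p.2 ^ 2) ^ 2)⁻¹)).comp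
        ((2 * p.1) • ContinuousLinearMap.fst ℝ ℝ ℝ + (2 * p.2) • ContinuousLinearMap.snd ℝ ℝ ℝ)) p :=
  (hasFDerivAt_inv (qne p)).comp p (hasQ p)

lemma hasH1 (p : ℝ × ℝ) : HasFDerivAt h1
    (((-(1/2 : ℝ)) • (ContinuousLinearMap.smulRight (1 : ℝ →L[ℝ] ℝ) (-((1 + p.1 ^ 2 + p.2 ^ 2) ^ 2)⁻¹)).comp
      ((2 * p.1) • ContinuousLinearMap.fst ℝ ℝ ℝ + (2 * p.2) • ContinuousLinearMap.snd ℝ ℝ ℝ))) p := by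
  have h := (hasQinv p).const_mul (-(1/2 : ℝ))
  have he : (fun p : ℝ × ℝ => -(1/2 : ℝ) * (1 + p.1 ^ 2 + p.2 ^ 2)⁻¹) = h1 := by
    funext q; simp [h1]; field_simp
  rwa [he] at h

lemma hasH2 (p : ℝ × ℝ) : HasFDerivAt h2
    (((1 + p.1 ^ 2 + p.2 ^ 2)⁻¹) • ContinuousLinearMap.snd ℝ ℝ ℝ +
      p.2 • ((ContinuousLinearMap.smulRight (1 : ℝ →L[ℝ] ℝ) (-((1 + p.1 ^ 2 + p.2 ^ 2) ^ 2)⁻¹)).comp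
        ((2 * p.1) • ContinuousLinearMap.fst ℝ ℝ ℝ + (2 * p.2) • ContinuousLinearMap.snd ℝ ℝ ℝ))) p := by
  have h := (hasFDerivAt_snd (𝕜 := ℝ) (p := p)).mul (hasQinv p)
  have he : (fun p : ℝ × ℝ => p.2 * (1 + p.1 ^ 2 + p.2 ^ 2)⁻¹) = h2 := by
    funext q; simp [h2, div_eq_mul_inv]
  change HasFDerivAt (fun p : ℝ × ℝ => p.2 * (1 + p.1 ^ 2 + p.2 ^ 2)⁻¹) _ p at h
  rw [he] at h
  refine h.congr_fderiv ?_
  ext v <;> simp <;> ring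

lemma hasH3 (p : ℝ × ℝ) : HasFDerivAt h3
    (-(((1 + p.1 ^ 2 + p.2 ^ 2)⁻¹) • ContinuousLinearMap.fst ℝ ℝ ℝ +
      p.1 • ((ContinuousLinearMap.smulRight (1 : ℝ →L[ℝ] ℝ) (-((1 + p.1 ^ 2 + p.2 ^ 2) ^ 2)⁻¹)).comp
        ((2 * p.1) • ContinuousLinearMap.fst ℝ ℝ ℝ + (2 * p.2) • ContinuousLinearMap.snd ℝ ℝ ℝ)))) p := by
  have h := ((hasFDerivAt_fst (𝕜 := ℝ) (p := p)).mul (hasQinv p)).neg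
  have he : (fun p : ℝ × ℝ => -(p.1 * (1 + p.1 ^ 2 + p.2 ^ 2)⁻¹)) = h3 := by
    funext q; simp [h3, div_eq_mul_inv]
  change HasFDerivAt (fun p : ℝ × ℝ => -(p.1 * (1 + p.1 ^ 2 + p.2 ^ 2)⁻¹)) _ p at h
  rw [he] at h
  refine h.congr_fderiv ?_
  ext v <;> simp <;> ring

/-- On ℝ², the fields X₁, X₂, X₃ of P₃ ≅ so(3) are Hamiltonian with respect to
ω = (1+x²+y²)⁻² dx∧dy with Hamiltonian functions h₁, h₂, h₃, which together with the
constant 1 close a central extension of so(3) under the induced Poisson bracket. -/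
theorem stmt_8 : ∀ p : ℝ × ℝ,
    (pdx h1 p = -(((1 + p.1 ^ 2 + p.2 ^ 2) ^ 2)⁻¹ * (X1 p).2) ∧
      pdy h1 p = ((1 + p.1 ^ 2 + p.2 ^ 2) ^ 2)⁻¹ * (X1 p).1) ∧
    (pdx h2 p = -(((1 + p.1 ^ 2 + p.2 ^ 2) ^ 2)⁻¹ * (X2 p).2) ∧
      pdy h2 p = ((1 + p.1 ^ 2 + p.2 ^ 2) ^ 2)⁻¹ * (X2 p).1) ∧
    (pdx h3 p = -(((1 + p.1 ^ 2 + p.2 ^ 2) ^ 2)⁻¹ * (X3 p).2) ∧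
      pdy h3 p = ((1 + p.1 ^ 2 + p.2 ^ 2) ^ 2)⁻¹ * (X3 p).1) ∧
    pbw h1 h2 p = -h3 p ∧ pbw h1 h3 p = h2 p ∧ pbw h2 h3 p = -4 * h1 p - 1 := by
  intro p
  have hq := qne p
  have e1x := pd1 (hasH1 p); have e1y := pd2 (hasH1 p)
  have e2x := pd1 (hasH2 p); have e2y := pd2 (hasH2 p)
  have e3x := pd1 (hasH3 p); have e3y := pd2 (hasH3 p)
  simp only [ContinuousLinearMap.add_apply, ContinuousLinearMap.smul_apply,
    ContinuousLinearMap.comp_apply, ContinuousLinearMap.coe_fst', ContinuousLinearMap.coe_snd',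
    ContinuousLinearMap.neg_apply, ContinuousLinearMap.smulRight_apply,
    ContinuousLinearMap.one_apply, smul_eq_mul] at e1x e1y e2x e2y e3x e3y
  norm_num at e1x e1y e2x e2y e3x e3y
  refine ⟨⟨?_, ?_⟩, ⟨?_, ?_⟩, ⟨?_, ?_⟩, ?_, ?_, ?_⟩ <;>
    simp only [pbw, X1, X2, X3, h1, h2, h3, e1x, e1y, e2x, e2y, e3x, e3y] <;>
    field_simp <;> ring


end Stmt8
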